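/- For every γ ∈ (0,1) and every positive integer l, the Chebyshev polynomial of the first kind satisfies T_l(1/γ) = cosh(l·arcosh(1/γ)) ≥ (1/2)·exp(2l·√((1/γ − 1)/(1/γ + 1))). -/

import Mathlib

/-- The inverse hyperbolic cosine, `arcosh t = log (t + √(t² - 1))` for `t ≥ 1`. -/
noncomputable def arcosh (t : ℝ) : ℝ := Real.log (t + Real.sqrt (t ^ 2 - 1))

lemma T_real_cosh (t : ℝ) (n : ℤ) :
    (Polynomial.Chebyshev.T ℝ n).eval (Real.cosh t) = Real.cosh (n * t) := by
  have h := Polynomial.Chebyshev.T_complex_cos ((t : ℂ) * Complex.I) n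
  rw [Complex.cos_mul_I] at h
  have hmul : (n : ℂ) * ((t : ℂ) * Complex.I) = ((n : ℝ) * t : ℂ) * Complex.I := by
    push_cast; ring
  rw [hmul, Complex.cos_mul_I] at h
  have hcast : Complex.ofReal ((Polynomial.Chebyshev.T ℝ n).eval (Real.cosh t))
      = (Polynomial.Chebyshev.T ℂ n).eval ((Real.cosh t : ℝ) : ℂ) := by
    rw [← Polynomial.Chebyshev.map_T (algebraMap ℝ ℂ) n, Polynomial.eval_map]
    exact (Polynomial.eval₂_hom (algebraMap ℝ ℂ) (Real.cosh t)).symm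
  rw [← Complex.ofReal_cosh, ← hcast] at h
  exact_mod_cast h

lemma cosh_arcosh {x : ℝ} (hx : 1 ≤ x) : Real.cosh (arcosh x) = x := by
  have h1 : (0:ℝ) ≤ x ^ 2 - 1 := by nlinarith
  have hs : Real.sqrt (x ^ 2 - 1) ^ 2 = x ^ 2 - 1 := Real.sq_sqrt h1
  have hsnn : 0 ≤ Real.sqrt (x ^ 2 - 1) := Real.sqrt_nonneg _
  have hpos : 0 < x + Real.sqrt (x ^ 2 - 1) := by nlinarith
  rw [arcosh, Real.cosh_log hpos]
  have hinv : (x + Real.sqrt (x ^ 2 - 1))⁻¹ = x - Real.sqrt (x ^ 2 - 1) := by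
    refine inv_eq_of_mul_eq_one_right ?_
    nlinarith
  rw [hinv]; ring

lemma exp_le_aux {u : ℝ} (hu : 0 ≤ u) : (1 - u) * Real.exp (2 * u) ≤ 1 + u := by
  set f : ℝ → ℝ := fun x => (1 + x) * Real.exp (-(2 * x)) - (1 - x) with hf
  have hderiv : ∀ x : ℝ, HasDerivAt f (1 - (1 + 2 * x) * Real.exp (-(2 * x))) x := by
    intro x
    have he : HasDerivAt (fun x : ℝ => Real.exp (-(2 * x))) (-2 * Real.exp (-(2 * x))) x := by
      have : HasDerivAt (fun x : ℝ => -(2 * x)) (-2) x := by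
        simpa using ((hasDerivAt_id x).const_mul (-2 : ℝ))
      simpa [mul_comm] using this.exp
    have h1 : HasDerivAt (fun x : ℝ => (1 + x) * Real.exp (-(2 * x)))
        (1 * Real.exp (-(2 * x)) + (1 + x) * (-2 * Real.exp (-(2 * x)))) x :=
      (((hasDerivAt_id x).const_add 1)).mul he
    have h2 : HasDerivAt (fun x : ℝ => (1 : ℝ) - x) (-1) x := by
      exact (hasDerivAt_id x).const_sub 1
    have := h1.sub h2
    convert this using 1
    · rfl
    · rfl
    · rfl
    ring
  have hmono : MonotoneOn f (Set.Ici (0 : ℝ)) := by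
    apply monotoneOn_of_deriv_nonneg (convex_Ici 0)
    · exact (Continuous.sub ((continuous_const.add continuous_id).mul
        (Real.continuous_exp.comp (continuous_const.mul continuous_id).neg))
        (continuous_const.sub continuous_id)).continuousOn
    · intro x _
      exact (hderiv x).differentiableAt.differentiableWithinAt
    · intro x hx
      rw [(hderiv x).deriv]
      have hb : 1 + 2 * x ≤ Real.exp (2 * x) := by
        have := Real.add_one_le_exp (2 * x); linarith
      have hepos : 0 < Real.exp (-(2 * x)) := Real.exp_pos _
      have : (1 + 2 * x) * Real.exp (-(2 * x)) ≤ 1 := by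
        rw [Real.exp_neg]
        rw [mul_inv_le_iff₀ (Real.exp_pos _)]
        linarith
      linarith
  have h0 : f 0 ≤ f u := hmono (by simp) hu hu
  simp only [hf] at h0
  norm_num at h0
  have hepos : 0 < Real.exp (-(2 * u)) := Real.exp_pos _
  have : (1 - u) ≤ (1 + u) * Real.exp (-(2 * u)) := by linarith
  calc (1 - u) * Real.exp (2 * u) ≤ (1 + u) * Real.exp (-(2 * u)) * Real.exp (2 * u) := by
        apply mul_le_mul_of_nonneg_right this (Real.exp_pos _).le
    _ = 1 + u := by rw [mul_assoc, ← Real.exp_add]; simp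

theorem chebyshev_T_at_inv_gamma (γ : ℝ) (hγ : γ ∈ Set.Ioo (0 : ℝ) 1) (l : ℕ) (hl : 0 < l) :
    (Polynomial.Chebyshev.T ℝ l).eval (1 / γ) = Real.cosh (l * arcosh (1 / γ)) ∧
    (1 / 2) * Real.exp (2 * l * Real.sqrt ((1 / γ - 1) / (1 / γ + 1))) ≤
      (Polynomial.Chebyshev.T ℝ l).eval (1 / γ) := by
  obtain ⟨hγ0, hγ1⟩ := hγ
  set x : ℝ := 1 / γ with hx
  have hx1 : 1 < x := by rw [hx]; rw [lt_div_iff₀ hγ0]; linarith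
  have hxle : 1 ≤ x := hx1.le
  have hc : Real.cosh (arcosh x) = x := cosh_arcosh hxle
  have heq : (Polynomial.Chebyshev.T ℝ l).eval x = Real.cosh (l * arcosh x) := by
    have := T_real_cosh (arcosh x) (l : ℤ)
    rw [hc] at this
    simpa using this
  refine ⟨heq, ?_⟩
  -- set u
  set u : ℝ := Real.sqrt ((x - 1) / (x + 1)) with hu
  have hx1pos : (0:ℝ) < x + 1 := by linarith
  have hunn : 0 ≤ u := Real.sqrt_nonneg _
  have hu2 : u ^ 2 = (x - 1) / (x + 1) :=
    Real.sq_sqrt (div_nonneg (by linarith) hx1pos.le)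
  have hu1 : u < 1 := by
    rw [hu]
    have : (x - 1) / (x + 1) < 1 := by rw [div_lt_one hx1pos]; linarith
    calc Real.sqrt ((x - 1) / (x + 1)) < Real.sqrt 1 := by
          apply Real.sqrt_lt_sqrt (div_nonneg (by linarith) hx1pos.le) this
      _ = 1 := Real.sqrt_one
  -- x + sqrt(x^2-1) = (1+u)/(1-u)
  have hu2' : u ^ 2 * (x + 1) = x - 1 := by
    rw [hu2]; field_simp
  have hx21 : x ^ 2 - 1 = (u * (x + 1)) ^ 2 := by
    rw [mul_pow, hu2]; field_simp; ring
  have hsq : Real.sqrt (x ^ 2 - 1) = u * (x + 1) := by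
    rw [hx21, Real.sqrt_sq (by positivity)]
  have hkey : x + Real.sqrt (x ^ 2 - 1) = (1 + u) / (1 - u) := by
    rw [hsq, eq_div_iff (by linarith : (1:ℝ) - u ≠ 0)]
    linear_combination -hu2'
  -- arcosh x ≥ 2u
  have harc : 2 * u ≤ arcosh x := by
    rw [arcosh, hkey]
    rw [← Real.log_exp (2 * u)]
    apply Real.log_le_log (Real.exp_pos _)
    have h1u : (0:ℝ) < 1 - u := by linarith
    rw [le_div_iff₀ h1u]
    have := exp_le_aux hunn
    linarith [exp_le_aux hunn]
  -- coshy ≥ exp y / 2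
  have hl1 : (1:ℝ) ≤ (l : ℝ) := by exact_mod_cast hl
  have hmul : 2 * (l:ℝ) * u ≤ (l:ℝ) * arcosh x := by
    have : (l:ℝ) * (2 * u) ≤ (l:ℝ) * arcosh x :=
      mul_le_mul_of_nonneg_left harc (by positivity)
    linarith
  rw [heq, Real.cosh_eq]
  have h1 : Real.exp (2 * (l:ℝ) * u) ≤ Real.exp ((l:ℝ) * arcosh x) := Real.exp_le_exp.2 hmul
  have h2 : 0 < Real.exp (-((l:ℝ) * arcosh x)) := Real.exp_pos _
  linarith
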